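/- Uniform solutions of the Lennard-Jones chain exist up to the applied load 2.76: with a₀ the unique global minimizer over (0,∞) of r ↦ φ(r) + φ(2r), one has φ'(a₀) + 2φ'(2a₀) = 0 and φ'(11/10) + 2φ'(11/5) > 2.76; consequently, for every t ∈ [0, 2.76] there exists r ∈ [a₀, 11/10] with φ'(r) + 2φ'(2r) = t. -/

import Mathlib

noncomputable def LJ : ℝ → ℝ := fun r => r ^ (-12 : ℤ) - 2 * r ^ (-6 : ℤ)

noncomputable def Dlj : ℝ → ℝ := fun r => -12 * r ^ (-13 : ℤ) + 12 * r ^ (-7 : ℤ)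

lemma lj_hasDerivAt {r : ℝ} (hr : r ≠ 0) : HasDerivAt LJ (Dlj r) r := by
  have h1 := hasDerivAt_zpow (-12) r (Or.inl hr)
  have h2 := (hasDerivAt_zpow (-6) r (Or.inl hr)).const_mul 2
  have := h1.sub h2
  refine this.congr_deriv ?_
  unfold Dlj
  push_cast
  ring_nf

lemma lj_deriv {r : ℝ} (hr : r ≠ 0) : deriv LJ r = Dlj r := (lj_hasDerivAt hr).deriv

lemma force_eq {r : ℝ} (hr : 0 < r) :
    deriv LJ r + 2 * deriv LJ (2 * r) = Dlj r + 2 * Dlj (2 * r) := by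
  rw [lj_deriv hr.ne', lj_deriv (by positivity : (2:ℝ) * r ≠ 0)]

lemma sum_hasDerivAt {r : ℝ} (hr : r ≠ 0) :
    HasDerivAt (fun s => LJ s + LJ (2 * s)) (Dlj r + 2 * Dlj (2 * r)) r := by
  have h1 := lj_hasDerivAt hr
  have hinner : HasDerivAt (fun y : ℝ => 2 * y) 2 r := by
    simpa using (hasDerivAt_id r).const_mul 2
  have h2 : HasDerivAt (fun s : ℝ => LJ (2 * s)) (Dlj (2 * r) * 2) r :=
    (lj_hasDerivAt (by positivity : (2:ℝ) * r ≠ 0)).comp r hinner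
  have := h1.add h2
  refine this.congr_deriv ?_
  ring

lemma min_le {a₀ : ℝ} (ha₀ : 0 < a₀)
    (hmin : ∀ r : ℝ, 0 < r → LJ a₀ + LJ (2 * a₀) ≤ LJ r + LJ (2 * r)) :
    a₀ ≤ 11 / 10 := by
  by_contra h
  push_neg at h
  have h1 := hmin 1 one_pos
  set u : ℝ := a₀ ^ (-6 : ℤ) with hu
  set v : ℝ := (2 * a₀) ^ (-6 : ℤ) with hv
  have hu0 : 0 < u := by positivity
  have hv0 : 0 < v := by positivity
  have hub : u ≤ (10 / 11 : ℝ) ^ 6 := by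
    rw [hu, zpow_neg]
    rw [show ((10:ℝ)/11)^6 = (((11:ℝ)/10)^6)⁻¹ by norm_num]
    apply inv_anti₀ (by positivity)
    apply pow_le_pow_left₀ (by norm_num) h.le
  have hvb : v ≤ (5 / 11 : ℝ) ^ 6 := by
    rw [hv, zpow_neg]
    rw [show ((5:ℝ)/11)^6 = (((11:ℝ)/5)^6)⁻¹ by norm_num]
    apply inv_anti₀ (by positivity)
    apply pow_le_pow_left₀ (by norm_num) (by linarith)
  have ha12 : a₀ ^ (-12 : ℤ) = u ^ 2 := by
    rw [hu, ← zpow_natCast (a₀ ^ (-6:ℤ)) 2, ← zpow_mul]; norm_num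
  have hb12 : (2 * a₀) ^ (-12 : ℤ) = v ^ 2 := by
    rw [hv, ← zpow_natCast ((2*a₀) ^ (-6:ℤ)) 2, ← zpow_mul]; norm_num
  have e1 : LJ 1 + LJ (2 * 1) = -(4223/4096 : ℝ) := by norm_num [LJ]
  rw [e1] at h1
  have e2 : LJ a₀ + LJ (2 * a₀) = u ^ 2 - 2 * u + (v ^ 2 - 2 * v) := by
    simp only [LJ]
    rw [ha12, hb12, ← hu, ← hv]
  rw [e2] at h1
  nlinarith [mul_nonneg (by linarith : (0:ℝ) ≤ (10/11:ℝ)^6 - u) (by nlinarith : (0:ℝ) ≤ 2 - (10/11:ℝ)^6 - u),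
    mul_nonneg (by linarith : (0:ℝ) ≤ (5/11:ℝ)^6 - v) (by nlinarith : (0:ℝ) ≤ 2 - (5/11:ℝ)^6 - v)]

lemma dlj_contAt {r : ℝ} (hr : r ≠ 0) : ContinuousAt Dlj r := by
  unfold Dlj
  have h13 : ContinuousAt (fun x : ℝ => x ^ (-13 : ℤ)) r := continuousAt_zpow₀ r (-13) (Or.inl hr)
  have h7 : ContinuousAt (fun x : ℝ => x ^ (-7 : ℤ)) r := continuousAt_zpow₀ r (-7) (Or.inl hr)
  exact (h13.const_mul _).add (h7.const_mul _)

/-- Uniform solutions of the Lennard-Jones chain exist up to the applied load `2.76`: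
with `a₀` the global minimizer of `r ↦ φ(r) + φ(2r)` over `(0,∞)`, one has
`φ'(a₀) + 2φ'(2a₀) = 0` and `φ'(11/10) + 2φ'(11/5) > 2.76`, and consequently every
load `t ∈ [0, 2.76]` is attained at some `r ∈ [a₀, 11/10]`. -/
theorem stmt_11 (a₀ : ℝ) (ha₀ : 0 < a₀)
    (hmin : ∀ r : ℝ, 0 < r → LJ a₀ + LJ (2 * a₀) ≤ LJ r + LJ (2 * r)) :
    deriv LJ a₀ + 2 * deriv LJ (2 * a₀) = 0 ∧
    2.76 < deriv LJ (11 / 10) + 2 * deriv LJ (11 / 5) ∧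
    (∀ t : ℝ, 0 ≤ t → t ≤ 2.76 →
      ∃ r : ℝ, a₀ ≤ r ∧ r ≤ 11 / 10 ∧ deriv LJ r + 2 * deriv LJ (2 * r) = t) := by
  -- critical point
  have hcrit : Dlj a₀ + 2 * Dlj (2 * a₀) = 0 := by
    have hloc : IsLocalMin (fun s => LJ s + LJ (2 * s)) a₀ := by
      have hev : ∀ᶠ s in nhds a₀, 0 < s := eventually_gt_nhds ha₀
      exact hev.mono fun s hs => hmin s hs
    exact hloc.hasDerivAt_eq_zero (sum_hasDerivAt ha₀.ne')
  have part1 : deriv LJ a₀ + 2 * deriv LJ (2 * a₀) = 0 := by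
    rw [force_eq ha₀]; exact hcrit
  -- value at 11/10
  have hval : deriv LJ (11/10) + 2 * deriv LJ (11/5) = Dlj (11/10) + 2 * Dlj (11/5) := by
    rw [lj_deriv (by norm_num : (11/10 : ℝ) ≠ 0), lj_deriv (by norm_num : (11/5 : ℝ) ≠ 0)]
  have hnum : (2.76 : ℝ) < Dlj (11/10) + 2 * Dlj (11/5) := by
    norm_num [Dlj]
  have part2 : (2.76 : ℝ) < deriv LJ (11/10) + 2 * deriv LJ (11/5) := by
    rw [hval]; exact hnum
  refine ⟨part1, part2, ?_⟩
  intro t ht0 ht1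
  have hle : a₀ ≤ 11 / 10 := min_le ha₀ hmin
  set F : ℝ → ℝ := fun r => deriv LJ r + 2 * deriv LJ (2 * r) with hF
  have hcont : ContinuousOn F (Set.Icc a₀ (11/10)) := by
    have hG : ContinuousOn (fun r : ℝ => Dlj r + 2 * Dlj (2 * r)) (Set.Icc a₀ (11/10)) := by
      intro r hr
      have hrpos : 0 < r := lt_of_lt_of_le ha₀ hr.1
      have c1 : ContinuousAt Dlj r := dlj_contAt hrpos.ne'
      have c2 : ContinuousAt (fun s : ℝ => Dlj (2 * s)) r :=
        (dlj_contAt (by positivity : (2:ℝ) * r ≠ 0)).comp (by fun_prop)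
      exact (c1.add (c2.const_mul 2)).continuousWithinAt
    apply hG.congr
    intro r hr
    exact force_eq (lt_of_lt_of_le ha₀ hr.1)
  have hsub := intermediate_value_Icc hle hcont
  have htmem : t ∈ Set.Icc (F a₀) (F (11/10)) := by
    constructor
    · rw [hF]; simpa [part1] using ht0
    · have : F (11/10) = deriv LJ (11/10) + 2 * deriv LJ (11/5) := by
        rw [hF]; norm_num
      rw [this]; linarith
  obtain ⟨r, hrmem, hrt⟩ := hsub htmem
  exact ⟨r, hrmem.1, hrmem.2, hrt⟩
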